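/- Let (X,J,g) be a Kähler manifold and let A be a smooth J-anti-linear endomorphism of T_X (i.e. AJ = -JA with values in T_{X,J}). Then the curvature action vanishes on the antisymmetric part: if A is also g-antisymmetric (A = -Aᵀ over g), then R_g ∗ A = 0, where (R_g∗A)ξ := ∑_k R_g(ξ,e_k) A e_k over a g-orthonormal frame. -/
import Mathlib


open scoped RealInnerProductSpace

/-- Let `(X,J,g)` be a Kähler manifold and `A` a smooth `J`-anti-linear endomorphism field of
`T_X` which is moreover `g`-antisymmetric.  Then the curvature action vanishes:
`R_g ∗ A = 0`, where `(R_g∗A)ξ := ∑_k R_g(ξ,e_k) A e_k` over a `g`-orthonormal frame.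
Pointwise model: `V` is the tangent space with inner product `g`, orthonormal basis `b`,
`J` the complex structure (orthogonal, `J² = -1`), `R` the curvature tensor with its standard
symmetries (antisymmetries, pair symmetry, first Bianchi identity) and `J`-invariance
`R(x,y)J = JR(x,y)`, and `A` satisfies `AJ = -JA`, `A = -Aᵀ`. -/
theorem stmt14 {V : Type*} [NormedAddCommGroup V] [InnerProductSpace ℝ V]
    [FiniteDimensional ℝ V] {ι : Type*} [Fintype ι] (b : OrthonormalBasis ι ℝ V)
    (J : V →ₗ[ℝ] V) (hJ2 : ∀ x, J (J x) = -x)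
    (hJiso : ∀ x y, ⟪J x, J y⟫ = ⟪x, y⟫)
    (R : V →ₗ[ℝ] V →ₗ[ℝ] V →ₗ[ℝ] V)
    (hR1 : ∀ x y z, R x y z = -R y x z)
    (hR2 : ∀ x y z w, ⟪R x y z, w⟫ = -⟪R x y w, z⟫)
    (hRpair : ∀ x y z w, ⟪R x y z, w⟫ = ⟪R z w x, y⟫)
    (hBianchi : ∀ x y z, R x y z + R y z x + R z x y = 0)
    (hRJ : ∀ x y z, R x y (J z) = J (R x y z))
    (A : V →ₗ[ℝ] V) (hAJ : ∀ x, A (J x) = -J (A x))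
    (hAanti : ∀ x y, ⟪A x, y⟫ = -⟪x, A y⟫) :
    ∀ ξ, ∑ k, R ξ (b k) (A (b k)) = 0 := by
  intro ξ
  -- `J` is skew-adjoint
  have hJskew : ∀ x y : V, ⟪J x, y⟫ = -⟪x, J y⟫ := by
    intro x y
    have h := hJiso x (J y)
    rw [hJ2, inner_neg_right] at h
    linarith
  -- expanding a linear map applied to a vector in the orthonormal basis
  have hexp : ∀ (C : V →ₗ[ℝ] V) (x : V), C x = ∑ l, ⟪b l, x⟫ • C (b l) := by
    intro C x
    conv_lhs => rw [← b.sum_repr' x]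
    rw [map_sum]
    simp [map_smul]
  -- trace vanishing for endomorphisms anticommuting with `J`
  have trace0 : ∀ C : V →ₗ[ℝ] V, (∀ x, C (J x) = -J (C x)) →
      (∑ k, ⟪C (b k), b k⟫) = 0 := by
    intro C hC
    have hx : ∀ x : V, ⟪C x, x⟫ = ∑ l, ⟪b l, x⟫ * ⟪C (b l), x⟫ := by
      intro x
      rw [hexp C x, sum_inner]
      refine Finset.sum_congr rfl fun l _ => ?_
      rw [real_inner_smul_left]
    have hswap : ∑ k, ⟪C (J (b k)), J (b k)⟫ = ∑ l, ⟪C (b l), b l⟫ := by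
      calc ∑ k, ⟪C (J (b k)), J (b k)⟫
          = ∑ k, ∑ l, ⟪b l, J (b k)⟫ * ⟪C (b l), J (b k)⟫ :=
            Finset.sum_congr rfl fun k _ => hx (J (b k))
        _ = ∑ l, ∑ k, ⟪J (b l), b k⟫ * ⟪b k, J (C (b l))⟫ := by
            rw [Finset.sum_comm]
            refine Finset.sum_congr rfl fun l _ => Finset.sum_congr rfl fun k _ => ?_
            have h1 : ⟪b l, J (b k)⟫ = -⟪J (b l), b k⟫ := by
              rw [hJskew (b l) (b k)]; ring
            have h2 : ⟪C (b l), J (b k)⟫ = -⟪J (C (b l)), b k⟫ := by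
              rw [hJskew (C (b l)) (b k)]; ring
            rw [h1, h2, real_inner_comm (J (C (b l))) (b k)]; ring
        _ = ∑ l, ⟪C (b l), b l⟫ := by
            refine Finset.sum_congr rfl fun l _ => ?_
            rw [b.sum_inner_mul_inner (J (b l)) (J (C (b l))), hJiso,
              real_inner_comm]
    have h0 : ∑ k, ⟪C (b k), b k⟫ = -∑ k, ⟪C (b k), b k⟫ := by
      calc ∑ k, ⟪C (b k), b k⟫
          = ∑ k, ⟪J (C (b k)), J (b k)⟫ :=
            Finset.sum_congr rfl fun k _ => (hJiso _ _).symm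
        _ = ∑ k, -⟪C (J (b k)), J (b k)⟫ := by
            refine Finset.sum_congr rfl fun k _ => ?_
            rw [hC, inner_neg_left, neg_neg]
        _ = -∑ k, ⟪C (J (b k)), J (b k)⟫ := by rw [Finset.sum_neg_distrib]
        _ = -∑ k, ⟪C (b k), b k⟫ := by rw [hswap]
    linarith
  -- it suffices that all inner products with the sum vanish
  have key : ∀ w : V, (∑ k, ⟪R ξ (b k) (A (b k)), w⟫) = 0 := by
    intro w
    -- expand `A (b k)` in the orthonormal basis
    have step1 : ∑ k, ⟪R ξ (b k) (A (b k)), w⟫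
        = ∑ k, ∑ l, ⟪A (b k), b l⟫ * ⟪R ξ (b k) (b l), w⟫ := by
      refine Finset.sum_congr rfl fun k _ => ?_
      rw [hexp (R ξ (b k)) (A (b k)), sum_inner]
      refine Finset.sum_congr rfl fun l _ => ?_
      rw [real_inner_smul_left, real_inner_comm (b l) (A (b k))]
    -- antisymmetry of the coefficients
    have ha : ∀ k l : ι, ⟪A (b l), b k⟫ = -⟪A (b k), b l⟫ := by
      intro k l
      have h1 := hAanti (b l) (b k)
      have h2 := real_inner_comm (b l) (A (b k))
      linarith
    -- vector form of the Bianchi identity we need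
    have hvec : ∀ x y z : V, R z x y - R z y x = -R x y z := by
      intro x y z
      have h1 := hBianchi z x y
      have h2 := hR1 y z x
      rw [h2] at h1
      have h4 : R z x y - R z y x + R x y z = 0 := by rw [← h1]; abel
      exact eq_neg_of_add_eq_zero_left h4
    have hD2 : ∑ k, ∑ l, ⟪A (b k), b l⟫ * ⟪R ξ (b k) (b l), w⟫
        = ∑ k, ∑ l, -⟪A (b k), b l⟫ * ⟪R ξ (b l) (b k), w⟫ := by
      rw [Finset.sum_comm]
      refine Finset.sum_congr rfl fun k _ => Finset.sum_congr rfl fun l _ => ?_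
      rw [ha k l]
    have hDD : (∑ k, ∑ l, ⟪A (b k), b l⟫ * ⟪R ξ (b k) (b l), w⟫)
          + (∑ k, ∑ l, ⟪A (b k), b l⟫ * ⟪R ξ (b k) (b l), w⟫)
        = -∑ k, ∑ l, ⟪A (b k), b l⟫ * ⟪R (b k) (b l) ξ, w⟫ := by
      nth_rewrite 2 [hD2]
      rw [← Finset.sum_neg_distrib, ← Finset.sum_add_distrib]
      refine Finset.sum_congr rfl fun k _ => ?_
      rw [← Finset.sum_neg_distrib, ← Finset.sum_add_distrib]
      refine Finset.sum_congr rfl fun l _ => ?_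
      have h := hvec (b k) (b l) ξ
      have h' : ⟪R ξ (b k) (b l), w⟫ - ⟪R ξ (b l) (b k), w⟫
          = -⟪R (b k) (b l) ξ, w⟫ := by
        rw [← inner_sub_left, ← inner_neg_left, h]
      linear_combination (⟪A (b k), b l⟫ : ℝ) * h'
    -- identify the right-hand side with a trace that vanishes
    have hT : ∑ k, ∑ l, ⟪A (b k), b l⟫ * ⟪R (b k) (b l) ξ, w⟫ = 0 := by
      have hC : ∀ x, (A ∘ₗ (R ξ w)) (J x) = -J ((A ∘ₗ (R ξ w)) x) := by
        intro x
        simp only [LinearMap.comp_apply]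
        rw [hRJ, hAJ]
      have htr := trace0 (A ∘ₗ (R ξ w)) hC
      calc ∑ k, ∑ l, ⟪A (b k), b l⟫ * ⟪R (b k) (b l) ξ, w⟫
          = ∑ k, ∑ l, ⟪R ξ w (b k), b l⟫ * ⟪b l, A (b k)⟫ := by
            refine Finset.sum_congr rfl fun k _ => Finset.sum_congr rfl fun l _ => ?_
            rw [hRpair (b k) (b l) ξ w, real_inner_comm (b l) (A (b k))]
            ring
        _ = ∑ k, ⟪R ξ w (b k), A (b k)⟫ :=
            Finset.sum_congr rfl fun k _ => b.sum_inner_mul_inner _ _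
        _ = ∑ k, -⟪(A ∘ₗ (R ξ w)) (b k), b k⟫ := by
            refine Finset.sum_congr rfl fun k _ => ?_
            simp only [LinearMap.comp_apply]
            have := hAanti (R ξ w (b k)) (b k)
            linarith
        _ = 0 := by rw [Finset.sum_neg_distrib, htr, neg_zero]
    rw [step1]
    rw [hT, neg_zero] at hDD
    linarith
  have h := key (∑ k, R ξ (b k) (A (b k)))
  rw [← sum_inner] at h
  exact inner_self_eq_zero.mp h
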